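/- Assume (A1)–(A2), fix t₀ ∈ [0,T] and x₀ ∈ ℝⁿ, and let (x*, u*) be an admissible pair for (t₀,x₀) that is optimal for the problem with terminal cost Ψ(x) = min_{i∈{1,…,m}} Ψ_i(x), where Ψ_i(x) = ½xᵀA_ix + b_iᵀx + c_i. Let k̃ ∈ argmin_{i∈{1,…,m}} Ψ_i(x*(T)). Then: (i) (x*, u*) is also an optimal pair for the problem with terminal cost Ψ_{k̃}, i.e., its cost with terminal cost Ψ_{k̃} equals Ṽ_{k̃}(t₀,x₀), the infimum over admissible pairs of the cost with terminal cost Ψ_{k̃}; and (ii) k̃ ∈ argmin_{i∈{1,…,m}} Ṽ_i(t₀,x₀). -/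

import Mathlib

open Matrix Set MeasureTheory

noncomputable section

/-- The total cost of a state/control pair `(x, u)` on `[t₀, T]`:
running cost `½ xᵀ M_xx x + ½ uᵀ R u + xᵀ S u` plus terminal cost `G (x T)`. -/
def LQRCost {n l : ℕ} (Mxx : ℝ → Matrix (Fin n) (Fin n) ℝ)
    (R : ℝ → Matrix (Fin l) (Fin l) ℝ) (S : ℝ → Matrix (Fin n) (Fin l) ℝ)
    (t₀ T : ℝ) (x : ℝ → Fin n → ℝ) (u : ℝ → Fin l → ℝ)
    (G : (Fin n → ℝ) → ℝ) : ℝ :=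
  (∫ s in t₀..T,
      (((1 : ℝ) / 2) * (x s ⬝ᵥ (Mxx s *ᵥ x s)) + ((1 : ℝ) / 2) * (u s ⬝ᵥ (R s *ᵥ u s))
        + x s ⬝ᵥ (S s *ᵥ u s))) + G (x T)

/-- A pair `(x, u) ∈ L²(t₀,T;ℝⁿ) × L²(t₀,T;ℝˡ)` is admissible for initial data `(t₀, x₀)`
if `x` is (absolutely) continuous, solves `ẋ(s) = A(s) x(s) + B(s) u(s)` a.e. on `(t₀,T)`
(equivalently, in integral form) and `x t₀ = x₀`. -/
def Admissible {n l : ℕ} (A : ℝ → Matrix (Fin n) (Fin n) ℝ)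
    (B : ℝ → Matrix (Fin n) (Fin l) ℝ) (t₀ T : ℝ) (x₀ : Fin n → ℝ)
    (x : ℝ → Fin n → ℝ) (u : ℝ → Fin l → ℝ) : Prop :=
  ContinuousOn x (Icc t₀ T) ∧ x t₀ = x₀ ∧
  (∀ s ∈ Icc t₀ T, x s = x₀ + ∫ τ in t₀..s, (A τ *ᵥ x τ + B τ *ᵥ u τ)) ∧
  MemLp x 2 (volume.restrict (Ioc t₀ T)) ∧
  MemLp u 2 (volume.restrict (Ioc t₀ T))

/-- The value function: infimum of the cost over all admissible pairs for `(t₀, x₀)`. -/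
def LQRValue {n l : ℕ} (A : ℝ → Matrix (Fin n) (Fin n) ℝ)
    (B : ℝ → Matrix (Fin n) (Fin l) ℝ)
    (Mxx : ℝ → Matrix (Fin n) (Fin n) ℝ) (R : ℝ → Matrix (Fin l) (Fin l) ℝ)
    (S : ℝ → Matrix (Fin n) (Fin l) ℝ) (t₀ T : ℝ) (x₀ : Fin n → ℝ)
    (G : (Fin n → ℝ) → ℝ) : ℝ :=
  sInf { c : ℝ | ∃ x u, Admissible A B t₀ T x₀ x u ∧ c = LQRCost Mxx R S t₀ T x u G }

/-- `D(t) = B(t) R(t)⁻¹ B(t)ᵀ`. -/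
def Dmat {n l : ℕ} (B : ℝ → Matrix (Fin n) (Fin l) ℝ)
    (R : ℝ → Matrix (Fin l) (Fin l) ℝ) (t : ℝ) : Matrix (Fin n) (Fin n) ℝ :=
  B t * (R t)⁻¹ * (B t)ᵀ

/-- `C(t) = M_xx(t) − S(t) R(t)⁻¹ S(t)ᵀ`. -/
def Cmat {n l : ℕ} (Mxx : ℝ → Matrix (Fin n) (Fin n) ℝ)
    (S : ℝ → Matrix (Fin n) (Fin l) ℝ) (R : ℝ → Matrix (Fin l) (Fin l) ℝ)
    (t : ℝ) : Matrix (Fin n) (Fin n) ℝ :=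
  Mxx t - S t * (R t)⁻¹ * (S t)ᵀ

/-- `M(t) = A(t) − B(t) R(t)⁻¹ S(t)ᵀ`. -/
def Mmat {n l : ℕ} (A : ℝ → Matrix (Fin n) (Fin n) ℝ)
    (B S : ℝ → Matrix (Fin n) (Fin l) ℝ) (R : ℝ → Matrix (Fin l) (Fin l) ℝ)
    (t : ℝ) : Matrix (Fin n) (Fin n) ℝ :=
  A t - B t * (R t)⁻¹ * (S t)ᵀ

/-- Assumptions (A1)–(A2): `A, B, S, M_xx, R` are continuous on `[0,T]`, `M_xx(t)` and
`R(t)` are symmetric positive definite, and `C(t) = M_xx(t) − S(t)R(t)⁻¹S(t)ᵀ` is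
symmetric positive definite, for every `t ∈ [0,T]`. -/
def A1A2 {n l : ℕ} (T : ℝ) (A : ℝ → Matrix (Fin n) (Fin n) ℝ)
    (B S : ℝ → Matrix (Fin n) (Fin l) ℝ)
    (Mxx : ℝ → Matrix (Fin n) (Fin n) ℝ) (R : ℝ → Matrix (Fin l) (Fin l) ℝ) : Prop :=
  ContinuousOn A (Icc 0 T) ∧ ContinuousOn B (Icc 0 T) ∧ ContinuousOn S (Icc 0 T) ∧
  ContinuousOn Mxx (Icc 0 T) ∧ ContinuousOn R (Icc 0 T) ∧
  (∀ t ∈ Icc 0 T, (Mxx t).PosDef) ∧ (∀ t ∈ Icc 0 T, (R t).PosDef) ∧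
  (∀ t ∈ Icc 0 T, (Cmat Mxx S R t).PosDef)

/-- `P : [0,T] → Sym(n)` solves the Riccati final value problem
`Ṗ = Pᵀ D P − Pᵀ M − Mᵀ P − C` on `(0,T)`, `P(T) = PT`. -/
def RiccatiSol {n : ℕ} (T : ℝ) (D C M : ℝ → Matrix (Fin n) (Fin n) ℝ)
    (PT : Matrix (Fin n) (Fin n) ℝ) (P : ℝ → Matrix (Fin n) (Fin n) ℝ) : Prop :=
  ContinuousOn P (Icc 0 T) ∧ (∀ t ∈ Icc 0 T, (P t).IsSymm) ∧
  (∀ t ∈ Ioo 0 T, ∀ i j, HasDerivAt (fun s => P s i j)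
      (((P t)ᵀ * D t * P t - (P t)ᵀ * M t - (M t)ᵀ * P t - C t) i j) t) ∧
  P T = PT

/-- `q : [0,T] → ℝⁿ` solves the linear final value problem
`q̇ = Pᵀ D q − Mᵀ q` on `(0,T)`, `q(T) = qT`. -/
def LinearSol {n : ℕ} (T : ℝ) (D M : ℝ → Matrix (Fin n) (Fin n) ℝ)
    (P : ℝ → Matrix (Fin n) (Fin n) ℝ) (qT : Fin n → ℝ) (q : ℝ → Fin n → ℝ) : Prop :=
  ContinuousOn q (Icc 0 T) ∧
  (∀ t ∈ Ioo 0 T, ∀ i, HasDerivAt (fun s => q s i)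
      (((P t)ᵀ *ᵥ (D t *ᵥ q t) - (M t)ᵀ *ᵥ q t) i) t) ∧
  q T = qT

/-- `r : [0,T] → ℝ` solves the scalar final value problem
`ṙ = ½ qᵀ D q` on `(0,T)`, `r(T) = rT`. -/
def ScalarSol {n : ℕ} (T : ℝ) (D : ℝ → Matrix (Fin n) (Fin n) ℝ)
    (q : ℝ → Fin n → ℝ) (rT : ℝ) (r : ℝ → ℝ) : Prop :=
  ContinuousOn r (Icc 0 T) ∧
  (∀ t ∈ Ioo 0 T, HasDerivAt r (((1 : ℝ) / 2) * (q t ⬝ᵥ (D t *ᵥ q t))) t) ∧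
  r T = rT

/-- The quadratic function `V_i(t,x) = ½ xᵀ P_i(t) x + q_i(t)ᵀ x + r_i(t)`. -/
def Vquad {n : ℕ} (P : ℝ → Matrix (Fin n) (Fin n) ℝ) (q : ℝ → Fin n → ℝ)
    (r : ℝ → ℝ) (t : ℝ) (x : Fin n → ℝ) : ℝ :=
  ((1 : ℝ) / 2) * (x ⬝ᵥ (P t *ᵥ x)) + q t ⬝ᵥ x + r t

/-- The quadratic terminal cost `Ψ_i(x) = ½ xᵀ A_i x + b_iᵀ x + c_i`. -/
def Psiq {n : ℕ} (Aq : Matrix (Fin n) (Fin n) ℝ) (b : Fin n → ℝ) (c : ℝ)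
    (x : Fin n → ℝ) : ℝ :=
  ((1 : ℝ) / 2) * (x ⬝ᵥ (Aq *ᵥ x)) + b ⬝ᵥ x + c


lemma dot_self_nonneg {n : ℕ} (y : Fin n → ℝ) : 0 ≤ y ⬝ᵥ y :=
  Finset.sum_nonneg fun i _ => mul_self_nonneg _

lemma dot_self_pos {n : ℕ} {y : Fin n → ℝ} (h : y ≠ 0) : 0 < y ⬝ᵥ y :=
  ((dot_self_nonneg y).lt_or_eq.resolve_right
    (fun h1 => h (dotProduct_self_eq_zero.mp h1.symm)))

lemma posdef_dot {n : ℕ} {M : Matrix (Fin n) (Fin n) ℝ} (hM : M.PosDef)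
    {x : Fin n → ℝ} (hx : x ≠ 0) : 0 < x ⬝ᵥ (M *ᵥ x) := by
  simpa using hM.dotProduct_mulVec_pos hx

lemma possemidef_dot {n : ℕ} {M : Matrix (Fin n) (Fin n) ℝ} (hM : M.PosSemidef)
    (x : Fin n → ℝ) : 0 ≤ x ⬝ᵥ (M *ᵥ x) := by
  simpa using hM.dotProduct_mulVec_nonneg x

lemma cont_dot_quad {n : ℕ} {s : Set ℝ} (C : ℝ → Matrix (Fin n) (Fin n) ℝ)
    (hC : ContinuousOn C s) :
    ContinuousOn (fun p : ℝ × (Fin n → ℝ) => p.2 ⬝ᵥ (C p.1 *ᵥ p.2)) (s ×ˢ univ) := by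
  have hCp : ∀ i j, ContinuousOn (fun p : ℝ × (Fin n → ℝ) => C p.1 i j) (s ×ˢ univ) := by
    intro i j
    exact ((continuous_apply j).comp (continuous_apply i)).comp_continuousOn
      (hC.comp continuousOn_fst (fun p (hp : p ∈ (s ×ˢ univ : Set (ℝ × (Fin n → ℝ)))) => hp.1))
  show ContinuousOn (fun p : ℝ × (Fin n → ℝ) => ∑ i, p.2 i * ∑ j, C p.1 i j * p.2 j) _
  apply continuousOn_finset_sum
  intro i _
  refine (((continuous_apply i).comp continuous_snd).continuousOn).mul ?_
  apply continuousOn_finset_sum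
  intro j _
  exact (hCp i j).mul ((continuous_apply j).comp continuous_snd).continuousOn

lemma unif_coercive {n : ℕ} {a b : ℝ} (hab : a ≤ b) (C : ℝ → Matrix (Fin n) (Fin n) ℝ)
    (hC : ContinuousOn C (Icc a b)) (hpd : ∀ t ∈ Icc a b, (C t).PosDef) :
    ∃ lam > (0:ℝ), ∀ t ∈ Icc a b, ∀ y : Fin n → ℝ, lam * (y ⬝ᵥ y) ≤ y ⬝ᵥ (C t *ᵥ y) := by
  rcases Nat.eq_zero_or_pos n with hn | hn
  · subst hn
    refine ⟨1, one_pos, fun t ht y => ?_⟩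
    have : y = 0 := Subsingleton.elim _ _
    simp [this]
  · -- sphere
    set Sp : Set (Fin n → ℝ) := {y | y ⬝ᵥ y = 1} with hSp
    have hcont : Continuous (fun y : Fin n → ℝ => y ⬝ᵥ y) := by
      show Continuous fun y : Fin n → ℝ => ∑ i, y i * y i
      exact continuous_finset_sum _ (fun i _ => (continuous_apply i).mul (continuous_apply i))
    have hclosed : IsClosed Sp := isClosed_eq hcont continuous_const
    have hbdd : Bornology.IsBounded Sp := by
      apply (Metric.isBounded_iff_subset_closedBall 0).mpr
      refine ⟨1, fun y hy => ?_⟩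
      simp only [Metric.mem_closedBall, dist_zero_right]
      rw [pi_norm_le_iff_of_nonneg zero_le_one]
      intro i
      have h1 : y i * y i ≤ y ⬝ᵥ y := by
        apply Finset.single_le_sum (f := fun j => y j * y j)
          (fun j _ => mul_self_nonneg _) (Finset.mem_univ i)
      rw [hy] at h1
      rw [Real.norm_eq_abs, abs_le]
      constructor <;> nlinarith
    have hSpc : IsCompact Sp := Metric.isCompact_of_isClosed_isBounded hclosed hbdd
    have hKc : IsCompact ((Icc a b) ×ˢ Sp) := isCompact_Icc.prod hSpc
    haveI : NeZero n := ⟨hn.ne'⟩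
    have hSpne : Sp.Nonempty := by
      refine ⟨Pi.single 0 1, ?_⟩
      simp [hSp, dotProduct, Pi.single_apply]
    have hKne : ((Icc a b) ×ˢ Sp).Nonempty := ⟨(a, hSpne.choose), ⟨⟨le_rfl, hab⟩, hSpne.choose_spec⟩⟩
    have hfc : ContinuousOn (fun p : ℝ × (Fin n → ℝ) => p.2 ⬝ᵥ (C p.1 *ᵥ p.2)) ((Icc a b) ×ˢ Sp) :=
      (cont_dot_quad C hC).mono (prod_mono_right (subset_univ _))
    obtain ⟨p₀, hp₀, hmin⟩ := hKc.exists_isMinOn hKne hfc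
    set lam := p₀.2 ⬝ᵥ (C p₀.1 *ᵥ p₀.2) with hlam
    have hp2ne : p₀.2 ≠ 0 := by
      intro h0
      have := hp₀.2
      rw [hSp] at this
      simp [h0] at this
    have hlampos : 0 < lam := posdef_dot (hpd p₀.1 hp₀.1) hp2ne
    refine ⟨lam, hlampos, fun t ht y => ?_⟩
    by_cases hy : y = 0
    · simp [hy]
    · have hq : 0 < y ⬝ᵥ y := dot_self_pos hy
      set r := Real.sqrt (y ⬝ᵥ y) with hr
      have hrpos : 0 < r := Real.sqrt_pos.mpr hq
      set z := r⁻¹ • y with hz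
      have hrr : r * r = y ⬝ᵥ y := Real.mul_self_sqrt hq.le
      have hrne : r ≠ 0 := hrpos.ne'
      have hzz : z ⬝ᵥ z = 1 := by
        rw [hz, smul_dotProduct, dotProduct_smul, smul_eq_mul, smul_eq_mul,
          ← hrr]
        field_simp
      have hmem : (t, z) ∈ (Icc a b ×ˢ Sp) := ⟨ht, hzz⟩
      have h1 : lam ≤ z ⬝ᵥ (C t *ᵥ z) := hmin hmem
      have h2 : z ⬝ᵥ (C t *ᵥ z) = r⁻¹ * (r⁻¹ * (y ⬝ᵥ (C t *ᵥ y))) := by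
        rw [hz, smul_dotProduct, Matrix.mulVec_smul, dotProduct_smul,
          smul_eq_mul, smul_eq_mul]
      rw [h2] at h1
      have h3 : lam * (r * r) ≤ y ⬝ᵥ (C t *ᵥ y) := by
        have e : r * r * (r⁻¹ * (r⁻¹ * (y ⬝ᵥ (C t *ᵥ y)))) = y ⬝ᵥ (C t *ᵥ y) := by
          field_simp
        calc lam * (r * r) = (r * r) * lam := mul_comm _ _
          _ ≤ (r * r) * (r⁻¹ * (r⁻¹ * (y ⬝ᵥ (C t *ᵥ y)))) :=
              mul_le_mul_of_nonneg_left h1 (mul_pos hrpos hrpos).le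
          _ = _ := e
      rw [hrr] at h3
      exact h3


lemma contOn_inv {l : ℕ} {s : Set ℝ} (R : ℝ → Matrix (Fin l) (Fin l) ℝ)
    (hR : ContinuousOn R s) (hpd : ∀ t ∈ s, (R t).PosDef) :
    ContinuousOn (fun t => (R t)⁻¹) s := by
  have hdet : ContinuousOn (fun t => (R t).det) s :=
    ((Continuous.matrix_det continuous_id).comp_continuousOn hR)
  have hadj : ContinuousOn (fun t => (R t).adjugate) s :=
    ((Continuous.matrix_adjugate continuous_id).comp_continuousOn hR)
  have : ContinuousOn (fun t => ((R t).det)⁻¹ • (R t).adjugate) s :=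
    (hdet.inv₀ (fun t ht => ((hpd t ht).det_pos).ne')).smul hadj
  refine this.congr fun t ht => ?_
  rw [Matrix.inv_def, Ring.inverse_eq_inv']

lemma entry_bound {k m : ℕ} {s : Set ℝ} (hs : IsCompact s) (M : ℝ → Matrix (Fin k) (Fin m) ℝ)
    (hM : ContinuousOn M s) :
    ∃ K ≥ (0:ℝ), ∀ t ∈ s, ∀ i j, |M t i j| ≤ K := by
  have hf : ContinuousOn (fun t => ∑ i, ∑ j, |M t i j|) s := by
    apply continuousOn_finset_sum; intro i _
    apply continuousOn_finset_sum; intro j _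
    exact (((continuous_apply j).comp (continuous_apply i)).comp_continuousOn hM).abs
  obtain ⟨K, hK⟩ := hs.exists_bound_of_continuousOn hf
  refine ⟨max K 0, le_max_right _ _, fun t ht i j => ?_⟩
  have h1 : |M t i j| ≤ ∑ i, ∑ j, |M t i j| := by
    calc |M t i j| ≤ ∑ j, |M t i j| :=
          Finset.single_le_sum (f := fun j => |M t i j|) (fun _ _ => abs_nonneg _)
            (Finset.mem_univ j)
      _ ≤ ∑ i, ∑ j, |M t i j| :=
          Finset.single_le_sum (f := fun i => ∑ j, |M t i j|)
            (fun _ _ => Finset.sum_nonneg fun _ _ => abs_nonneg _) (Finset.mem_univ i)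
  have h2 := hK t ht
  rw [Real.norm_eq_abs] at h2
  have h3 : (∑ i, ∑ j, |M t i j|) ≤ K := (le_abs_self _).trans h2
  exact le_max_of_le_left (h1.trans h3)

lemma quad_identity {n l : ℕ} (Rm : Matrix (Fin l) (Fin l) ℝ) (Sm : Matrix (Fin n) (Fin l) ℝ)
    (Mm : Matrix (Fin n) (Fin n) ℝ) (hR : Rm.PosDef) (x : Fin n → ℝ) (u : Fin l → ℝ) :
    ((1:ℝ)/2) * (x ⬝ᵥ (Mm *ᵥ x)) + ((1:ℝ)/2) * (u ⬝ᵥ (Rm *ᵥ u)) + x ⬝ᵥ (Sm *ᵥ u)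
      = ((1:ℝ)/2) * ((u + Rm⁻¹ *ᵥ (Smᵀ *ᵥ x)) ⬝ᵥ (Rm *ᵥ (u + Rm⁻¹ *ᵥ (Smᵀ *ᵥ x))))
        + ((1:ℝ)/2) * (x ⬝ᵥ ((Mm - Sm * Rm⁻¹ * Smᵀ) *ᵥ x)) := by
  have hRsymm : Rmᵀ = Rm := hR.isHermitian.eq
  have hdet : IsUnit Rm.det := isUnit_iff_ne_zero.mpr hR.det_pos.ne'
  set z := Smᵀ *ᵥ x with hzdef
  set w := Rm⁻¹ *ᵥ z with hwdef
  have hRw : Rm *ᵥ w = z := by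
    rw [hwdef, Matrix.mulVec_mulVec, Matrix.mul_nonsing_inv _ hdet, Matrix.one_mulVec]
  have e1 : (u + w) ⬝ᵥ (Rm *ᵥ (u + w))
      = u ⬝ᵥ (Rm *ᵥ u) + u ⬝ᵥ z + w ⬝ᵥ (Rm *ᵥ u) + w ⬝ᵥ z := by
    rw [Matrix.mulVec_add, hRw, add_dotProduct, dotProduct_add,
      dotProduct_add]
    ring
  have e2 : w ⬝ᵥ (Rm *ᵥ u) = u ⬝ᵥ z := by
    rw [Matrix.dotProduct_mulVec, ← Matrix.mulVec_transpose, hRsymm, hRw,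
      dotProduct_comm]
  have e3 : u ⬝ᵥ z = x ⬝ᵥ (Sm *ᵥ u) := by
    rw [hzdef, Matrix.mulVec_transpose, dotProduct_comm, Matrix.dotProduct_mulVec]
  have e4 : x ⬝ᵥ ((Mm - Sm * Rm⁻¹ * Smᵀ) *ᵥ x) = x ⬝ᵥ (Mm *ᵥ x) - z ⬝ᵥ w := by
    rw [Matrix.sub_mulVec, dotProduct_sub]
    congr 1
    rw [← Matrix.mulVec_mulVec, ← Matrix.mulVec_mulVec, ← hzdef, ← hwdef,
      Matrix.dotProduct_mulVec, ← Matrix.mulVec_transpose]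
  have e5 : w ⬝ᵥ z = z ⬝ᵥ w := dotProduct_comm _ _
  rw [e1, e2, e3, e4, e5]
  ring



variable {ν : Measure ℝ}

lemma mem2_comp {n : ℕ} {x : ℝ → Fin n → ℝ} (hx : MemLp x 2 ν) (i : Fin n) :
    MemLp (fun s => x s i) 2 ν :=
  (ContinuousLinearMap.proj (R := ℝ) (φ := fun _ : Fin n => ℝ) i).comp_memLp' hx

lemma bdd_mul_mem2 {c g : ℝ → ℝ} (hg : MemLp g 2 ν) (hc : AEStronglyMeasurable c ν)
    {K : ℝ} (hb : ∀ᵐ s ∂ν, |c s| ≤ K) : MemLp (fun s => c s * g s) 2 ν := by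
  refine MemLp.of_le_mul (c := K) hg (hc.mul hg.1) (hb.mono fun s h => ?_)
  rw [norm_mul]
  exact mul_le_mul_of_nonneg_right (by simpa using h) (norm_nonneg _)

lemma mem2_integrable_mul {f g : ℝ → ℝ} (hf : MemLp f 2 ν) (hg : MemLp g 2 ν) :
    Integrable (fun s => f s * g s) ν := by
  have hf2 : Integrable (fun s => f s ^ 2) ν := (memLp_two_iff_integrable_sq hf.1).mp hf
  have hg2 : Integrable (fun s => g s ^ 2) ν := (memLp_two_iff_integrable_sq hg.1).mp hg
  refine Integrable.mono' ((hf2.add hg2).const_mul ((1:ℝ)/2)) (hf.1.mul hg.1) ?_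
  filter_upwards with s
  simp only [Pi.add_apply]
  rw [Real.norm_eq_abs, abs_mul]
  nlinarith [abs_nonneg (f s), abs_nonneg (g s), sq_abs (f s), sq_abs (g s),
    sq_nonneg (|f s| - |g s|)]

lemma integrable_of_components {n : ℕ} {f : ℝ → Fin n → ℝ}
    (hf : ∀ i, Integrable (fun s => f s i) ν) : Integrable f ν := by
  have : f = fun s => ∑ i, Pi.single i (f s i) := by
    funext s
    exact (Finset.univ_sum_single (f s)).symm
  rw [this]
  apply integrable_finset_sum
  intro i _
  exact ((LinearMap.single ℝ (fun _ : Fin n => ℝ) i).toContinuousLinearMap).integrable_comp (hf i)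

lemma cs_integral {g : ℝ → ℝ} [IsFiniteMeasure ν] (hg : MemLp g 2 ν) :
    (∫ s, |g s| ∂ν) ^ 2 ≤ (ν univ).toReal * ∫ s, g s ^ 2 ∂ν := by
  set V := (ν univ).toReal with hV
  have hVnn : 0 ≤ V := ENNReal.toReal_nonneg
  have hg1 : Integrable (fun s => |g s|) ν := (hg.integrable one_le_two).abs
  have hg2 : Integrable (fun s => g s ^ 2) ν := (memLp_two_iff_integrable_sq hg.1).mp hg
  set I := ∫ s, |g s| ∂ν with hI
  set Q := ∫ s, g s ^ 2 ∂ν with hQ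
  have key : 0 ≤ V ^ 2 * Q - V * I ^ 2 := by
    have h0 : 0 ≤ ∫ s, (V * |g s| - I) ^ 2 ∂ν := integral_nonneg fun s => sq_nonneg _
    have hexp : ∫ s, (V * |g s| - I) ^ 2 ∂ν
        = V ^ 2 * Q - 2 * V * I * I + I ^ 2 * V := by
      have : ∀ s, (V * |g s| - I) ^ 2
          = V ^ 2 * g s ^ 2 - 2 * V * I * |g s| + I ^ 2 := by
        intro s
        have : |g s| ^ 2 = g s ^ 2 := sq_abs _
        nlinarith [sq_abs (g s)]
      simp_rw [this]
      rw [integral_add, integral_sub, integral_const_mul, integral_const_mul, integral_const]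
      · simp [hQ, hI, smul_eq_mul, mul_comm, measureReal_def, hV]
      · exact hg2.const_mul _
      · exact hg1.const_mul _
      · exact (hg2.const_mul _).sub (hg1.const_mul _)
      · exact integrable_const _
    nlinarith [h0, hexp]
  rcases hVnn.lt_or_eq with hVpos | hV0
  · nlinarith [key]
  · have hν : ν = 0 := by
      have : ν univ = 0 := by
        have hfin : ν univ < ⊤ := measure_lt_top _ _
        have h2 := ENNReal.toReal_eq_zero_iff (ν univ)
        have h3 : (ν univ).toReal = 0 := by rw [← hV]; exact hV0.symm
        rcases h2.mp h3 with h | h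
        · exact h
        · exact absurd h hfin.ne
      exact Measure.measure_univ_eq_zero.mp this
    have : I = 0 := by rw [hI, hν]; simp
    rw [this]
    have : Q = 0 := by rw [hQ, hν]; simp
    rw [hQ, hν] at key ⊢
    simp



lemma quadform_integrable {k m : ℕ} {ν : Measure ℝ} (M : ℝ → Matrix (Fin k) (Fin m) ℝ)
    (hM : ∀ i j, AEStronglyMeasurable (fun t => M t i j) ν)
    {K : ℝ} (hb : ∀ᵐ s ∂ν, ∀ i j, |M s i j| ≤ K)
    (x : ℝ → Fin k → ℝ) (y : ℝ → Fin m → ℝ)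
    (hxy : ∀ i j, Integrable (fun s => x s i * y s j) ν) :
    Integrable (fun s => x s ⬝ᵥ (M s *ᵥ y s)) ν := by
  have he : (fun s => x s ⬝ᵥ (M s *ᵥ y s))
      = fun s => ∑ i, ∑ j, M s i j * (x s i * y s j) := by
    funext s
    simp only [dotProduct, Matrix.mulVec, Finset.mul_sum]
    exact Finset.sum_congr rfl fun i _ => Finset.sum_congr rfl fun j _ => by ring
  rw [he]
  apply integrable_finset_sum; intro i _
  apply integrable_finset_sum; intro j _
  exact (hxy i j).bdd_mul (hM i j)
    (hb.mono fun s h => by simpa [Real.norm_eq_abs] using h i j)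

lemma le_of_sq_le_sq' {a b : ℝ} (ha : 0 ≤ a) (hb : 0 ≤ b) (h : a ^ 2 ≤ b ^ 2) : a ≤ b := by
  nlinarith

lemma contOn_entry {k m : ℕ} {s : Set ℝ} {M : ℝ → Matrix (Fin k) (Fin m) ℝ}
    (hM : ContinuousOn M s) (i : Fin k) (j : Fin m) :
    ContinuousOn (fun t => M t i j) s :=
  (continuous_apply j).comp_continuousOn ((continuous_apply i).comp_continuousOn hM)

lemma contOn_of_entries {k m : ℕ} {s : Set ℝ} {M : ℝ → Matrix (Fin k) (Fin m) ℝ}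
    (h : ∀ i j, ContinuousOn (fun t => M t i j) s) : ContinuousOn M s := by
  apply continuousOn_pi.mpr
  intro i
  exact continuousOn_pi.mpr fun j => h i j

lemma contOn_matmul {p q r : ℕ} {s : Set ℝ} {M : ℝ → Matrix (Fin p) (Fin q) ℝ}
    {N : ℝ → Matrix (Fin q) (Fin r) ℝ} (hM : ContinuousOn M s) (hN : ContinuousOn N s) :
    ContinuousOn (fun t => M t * N t) s := by
  apply contOn_of_entries
  intro i j
  have : (fun t => (M t * N t) i j) = fun t => ∑ k, M t i k * N t k j := by
    funext t; simp [Matrix.mul_apply]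
  rw [this]
  exact continuousOn_finset_sum _ fun k _ => (contOn_entry hM i k).mul (contOn_entry hN k j)

lemma contOn_transpose {k m : ℕ} {s : Set ℝ} {M : ℝ → Matrix (Fin k) (Fin m) ℝ}
    (hM : ContinuousOn M s) : ContinuousOn (fun t => (M t)ᵀ) s :=
  contOn_of_entries fun i j => contOn_entry hM j i

lemma vec_setInt_apply {k : ℕ} {s : Set ℝ} {F : ℝ → Fin k → ℝ}
    (hF : IntegrableOn F s volume) (j : Fin k) :
    (∫ τ in s, F τ) j = ∫ τ in s, F τ j :=
  ((ContinuousLinearMap.proj (R := ℝ) (φ := fun _ : Fin k => ℝ) j).integral_comp_comm hF).symm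

set_option maxHeartbeats 1000000 in
lemma cost_bddBelow {n l : ℕ} {T : ℝ} (hT : 0 < T)
    (A : ℝ → Matrix (Fin n) (Fin n) ℝ) (B S : ℝ → Matrix (Fin n) (Fin l) ℝ)
    (Mxx : ℝ → Matrix (Fin n) (Fin n) ℝ) (R : ℝ → Matrix (Fin l) (Fin l) ℝ)
    (hA1A2 : A1A2 T A B S Mxx R)
    (Aqi : Matrix (Fin n) (Fin n) ℝ) (hAqi : Aqi.PosSemidef) (bi : Fin n → ℝ) (ci : ℝ)
    {t₀ : ℝ} (ht₀ : t₀ ∈ Icc 0 T) (x₀ : Fin n → ℝ) :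
    ∃ K : ℝ, ∀ x u, Admissible A B t₀ T x₀ x u →
      K ≤ LQRCost Mxx R S t₀ T x u (Psiq Aqi bi ci) := by
  obtain ⟨hAc, hBc, hSc, hMxxc, hRc, hMxxpd, hRpd, hCpd⟩ := hA1A2
  rcases eq_or_lt_of_le ht₀.2 with heq | hlt
  · -- t₀ = T
    refine ⟨Psiq Aqi bi ci x₀, fun x u hadm => ?_⟩
    obtain ⟨hxc, hx0, hODE, hx2, hu2⟩ := hadm
    have hxT : x T = x₀ := by
      have := hODE T ⟨ht₀.2, le_rfl⟩
      rw [this, heq, intervalIntegral.integral_same, add_zero]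
    unfold LQRCost
    rw [hxT, heq, intervalIntegral.integral_same, zero_add]
  · -- t₀ < T
    set J : Set ℝ := Ioc t₀ T with hJdef
    set ν : Measure ℝ := volume.restrict J with hνdef
    haveI : IsFiniteMeasure ν := ⟨by
      rw [hνdef, Measure.restrict_apply_univ, Real.volume_Ioc]
      exact ENNReal.ofReal_lt_top⟩
    have hJsub : J ⊆ Icc 0 T := fun s hs => ⟨le_of_lt (lt_of_le_of_lt ht₀.1 hs.1), hs.2⟩
    have hIccsub : Icc t₀ T ⊆ Icc 0 T := Icc_subset_Icc ht₀.1 le_rfl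
    set V : ℝ := T - t₀ with hVdef
    have hV : 0 < V := sub_pos.mpr hlt
    have hνuniv : (ν univ).toReal = V := by
      rw [hνdef, Measure.restrict_apply_univ, Real.volume_Ioc, ENNReal.toReal_ofReal hV.le]
    -- continuity of auxiliary matrix functions
    have hRinvc : ContinuousOn (fun t => (R t)⁻¹) (Icc 0 T) := contOn_inv R hRc hRpd
    have hWc : ContinuousOn (fun t => (R t)⁻¹ * (S t)ᵀ) (Icc 0 T) :=
      contOn_matmul hRinvc (contOn_transpose hSc)
    have hCmc : ContinuousOn (Cmat Mxx S R) (Icc 0 T) := by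
      unfold Cmat
      exact hMxxc.sub (contOn_matmul (contOn_matmul hSc hRinvc) (contOn_transpose hSc))
    -- constants
    obtain ⟨KA, hKA0, hKA⟩ := entry_bound isCompact_Icc A hAc
    obtain ⟨KB, hKB0, hKB⟩ := entry_bound isCompact_Icc B hBc
    obtain ⟨KW, hKW0, hKW⟩ := entry_bound isCompact_Icc _ hWc
    obtain ⟨lam, hlam, hlamc⟩ := unif_coercive hT.le (Cmat Mxx S R) hCmc hCpd
    obtain ⟨mu, hmu, hmuc⟩ := unif_coercive hT.le R hRc hRpd
    set c1 : ℝ := Real.sqrt (2 * V / lam) with hc1def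
    set c2 : ℝ := Real.sqrt (2 * V / mu) with hc2def
    have hc1 : 0 ≤ c1 := Real.sqrt_nonneg _
    have hc2 : 0 ≤ c2 := Real.sqrt_nonneg _
    set cu : ℝ := c2 + KW * n * c1 with hcudef
    have hcu : 0 ≤ cu := by positivity
    set cF : ℝ := KA * n * c1 + KB * l * cu with hcFdef
    have hcF : 0 ≤ cF := by positivity
    set cT : ℝ := c1 / V + cF with hcTdef
    have hcT : 0 ≤ cT := by positivity
    set β : ℝ := (∑ j, |bi j|) * cT with hβdef
    have hβ : 0 ≤ β := by positivity
    refine ⟨ci - β ^ 2 / 4, fun x u hadm => ?_⟩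
    obtain ⟨hxc, hx0, hODE, hx2, hu2⟩ := hadm
    set W : ℝ → Matrix (Fin l) (Fin n) ℝ := fun t => (R t)⁻¹ * (S t)ᵀ with hWdef
    set v : ℝ → Fin l → ℝ := fun s => u s + W s *ᵥ x s with hvdef
    -- measurability of entries
    have aesm : ∀ {k m : ℕ} (M : ℝ → Matrix (Fin k) (Fin m) ℝ),
        ContinuousOn M (Icc 0 T) → ∀ i j, AEStronglyMeasurable (fun t => M t i j) ν := by
      intro k m M hM i j
      exact (((continuous_apply j).comp (continuous_apply i)).comp_continuousOn
        (hM.mono hJsub)).aestronglyMeasurable measurableSet_Ioc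
    have ae_J : ∀ᵐ s ∂ν, s ∈ J := ae_restrict_mem measurableSet_Ioc
    -- component MemLp
    have hxi2 : ∀ i, MemLp (fun s => x s i) 2 ν := fun i => mem2_comp hx2 i
    have hui2 : ∀ i, MemLp (fun s => u s i) 2 ν := fun i => mem2_comp hu2 i
    have hvi2 : ∀ i, MemLp (fun s => v s i) 2 ν := by
      intro i
      have h1 : (fun s => v s i) = fun s => u s i + ∑ j, W s i j * x s j := rfl
      rw [h1]
      have h2 : (fun s => ∑ j, W s i j * x s j)
          = ∑ j : Fin n, fun s => W s i j * x s j := by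
        funext s; simp
      refine (hui2 i).add ?_
      rw [h2]
      refine memLp_finset_sum' _ fun j _ => ?_
      exact bdd_mul_mem2 (hxi2 j) (aesm W hWc i j)
        (ae_J.mono fun s hs => hKW s (hJsub hs) i j)
    -- basic integrabilities
    have Ix1 : ∀ i, Integrable (fun s => x s i) ν := fun i => (hxi2 i).integrable one_le_two
    have Iu1 : ∀ i, Integrable (fun s => u s i) ν := fun i => (hui2 i).integrable one_le_two
    have Iv1 : ∀ i, Integrable (fun s => v s i) ν := fun i => (hvi2 i).integrable one_le_two
    have Ixx : ∀ i j, Integrable (fun s => x s i * x s j) ν :=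
      fun i j => mem2_integrable_mul (hxi2 i) (hxi2 j)
    have Ivv : ∀ i j, Integrable (fun s => v s i * v s j) ν :=
      fun i j => mem2_integrable_mul (hvi2 i) (hvi2 j)
    have Idotx : Integrable (fun s => x s ⬝ᵥ x s) ν := by
      have : (fun s => x s ⬝ᵥ x s) = fun s => ∑ i, x s i * x s i := rfl
      rw [this]; exact integrable_finset_sum _ fun i _ => Ixx i i
    have Idotv : Integrable (fun s => v s ⬝ᵥ v s) ν := by
      have : (fun s => v s ⬝ᵥ v s) = fun s => ∑ i, v s i * v s i := rfl
      rw [this]; exact integrable_finset_sum _ fun i _ => Ivv i i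
    obtain ⟨KR, hKR0, hKRb⟩ := entry_bound isCompact_Icc R hRc
    obtain ⟨KC, hKC0, hKCb⟩ := entry_bound isCompact_Icc _ hCmc
    have IQv : Integrable (fun s => v s ⬝ᵥ (R s *ᵥ v s)) ν :=
      quadform_integrable R (aesm R hRc)
        (ae_J.mono fun s hs i j => hKRb s (hJsub hs) i j) v v Ivv
    have IQx : Integrable (fun s => x s ⬝ᵥ (Cmat Mxx S R s *ᵥ x s)) ν :=
      quadform_integrable _ (aesm _ hCmc)
        (ae_J.mono fun s hs i j => hKCb s (hJsub hs) i j) x x Ixx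
    -- energy
    set E : ℝ := ∫ s in t₀..T,
      (((1 : ℝ) / 2) * (x s ⬝ᵥ (Mxx s *ᵥ x s)) + ((1 : ℝ) / 2) * (u s ⬝ᵥ (R s *ᵥ u s))
        + x s ⬝ᵥ (S s *ᵥ u s)) with hEdef
    have hpt : ∀ s ∈ J,
        (((1 : ℝ) / 2) * (x s ⬝ᵥ (Mxx s *ᵥ x s)) + ((1 : ℝ) / 2) * (u s ⬝ᵥ (R s *ᵥ u s))
          + x s ⬝ᵥ (S s *ᵥ u s))
        = ((1:ℝ)/2) * (v s ⬝ᵥ (R s *ᵥ v s))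
          + ((1:ℝ)/2) * (x s ⬝ᵥ (Cmat Mxx S R s *ᵥ x s)) := by
      intro s hs
      have hv : v s = u s + (R s)⁻¹ *ᵥ ((S s)ᵀ *ᵥ x s) := by
        rw [hvdef]
        simp only [hWdef]
        rw [← Matrix.mulVec_mulVec]
      rw [hv]
      exact quad_identity (R s) (S s) (Mxx s) (hRpd s (hJsub hs)) (x s) (u s)
    have hEsplit : E = ((1:ℝ)/2) * ∫ s, v s ⬝ᵥ (R s *ᵥ v s) ∂ν
        + ((1:ℝ)/2) * ∫ s, x s ⬝ᵥ (Cmat Mxx S R s *ᵥ x s) ∂ν := by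
      rw [hEdef, intervalIntegral.integral_of_le ht₀.2]
      rw [show (Ioc t₀ T) = J from rfl]
      have : ∫ s in J, (((1 : ℝ) / 2) * (x s ⬝ᵥ (Mxx s *ᵥ x s))
            + ((1 : ℝ) / 2) * (u s ⬝ᵥ (R s *ᵥ u s)) + x s ⬝ᵥ (S s *ᵥ u s))
          = ∫ s in J, (((1:ℝ)/2) * (v s ⬝ᵥ (R s *ᵥ v s))
            + ((1:ℝ)/2) * (x s ⬝ᵥ (Cmat Mxx S R s *ᵥ x s))) :=
        setIntegral_congr_fun measurableSet_Ioc hpt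
      rw [show (∫ s in J, (((1 : ℝ) / 2) * (x s ⬝ᵥ (Mxx s *ᵥ x s))
            + ((1 : ℝ) / 2) * (u s ⬝ᵥ (R s *ᵥ u s)) + x s ⬝ᵥ (S s *ᵥ u s)) ∂volume)
          = ∫ s, (((1:ℝ)/2) * (v s ⬝ᵥ (R s *ᵥ v s))
            + ((1:ℝ)/2) * (x s ⬝ᵥ (Cmat Mxx S R s *ᵥ x s))) ∂ν from this]
      rw [integral_add (IQv.const_mul _) (IQx.const_mul _), integral_const_mul, integral_const_mul]
    have hQv0 : 0 ≤ ∫ s, v s ⬝ᵥ (R s *ᵥ v s) ∂ν := by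
      apply integral_nonneg_of_ae
      filter_upwards [ae_J] with s hs
      exact possemidef_dot (hRpd s (hJsub hs)).posSemidef (v s)
    have hQx0 : 0 ≤ ∫ s, x s ⬝ᵥ (Cmat Mxx S R s *ᵥ x s) ∂ν := by
      apply integral_nonneg_of_ae
      filter_upwards [ae_J] with s hs
      exact possemidef_dot (hCpd s (hJsub hs)).posSemidef (x s)
    have hE0 : 0 ≤ E := by rw [hEsplit]; positivity
    set sE : ℝ := Real.sqrt E with hsEdef
    have hsE : 0 ≤ sE := Real.sqrt_nonneg _
    have hsE2 : sE ^ 2 = E := Real.sq_sqrt hE0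
    have hIx2 : lam * ∫ s, x s ⬝ᵥ x s ∂ν ≤ 2 * E := by
      have hmono : lam * ∫ s, x s ⬝ᵥ x s ∂ν ≤ ∫ s, x s ⬝ᵥ (Cmat Mxx S R s *ᵥ x s) ∂ν := by
        rw [← integral_const_mul]
        apply integral_mono_ae (Idotx.const_mul _) IQx
        filter_upwards [ae_J] with s hs
        exact hlamc s (hJsub hs) (x s)
      linarith [hEsplit, hQv0, hmono]
    have hIv2 : mu * ∫ s, v s ⬝ᵥ v s ∂ν ≤ 2 * E := by
      have hmono : mu * ∫ s, v s ⬝ᵥ v s ∂ν ≤ ∫ s, v s ⬝ᵥ (R s *ᵥ v s) ∂ν := by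
        rw [← integral_const_mul]
        apply integral_mono_ae (Idotv.const_mul _) IQv
        filter_upwards [ae_J] with s hs
        exact hmuc s (hJsub hs) (v s)
      linarith [hEsplit, hQx0, hmono]
    have hdotx0 : 0 ≤ ∫ s, x s ⬝ᵥ x s ∂ν := integral_nonneg fun s => dot_self_nonneg _
    have hdotv0 : 0 ≤ ∫ s, v s ⬝ᵥ v s ∂ν := integral_nonneg fun s => dot_self_nonneg _
    -- component L¹ bounds
    have habs_int : ∀ (g : ℝ → ℝ), Integrable g ν → Integrable (fun s => |g s|) ν :=
      fun g hg => hg.abs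
    have hxI : ∀ i, ∫ s, |x s i| ∂ν ≤ c1 * sE := by
      intro i
      have hsqint : Integrable (fun s => (x s i) ^ 2) ν := by
        simpa [pow_two] using Ixx i i
      have hsqle : ∫ s, (x s i) ^ 2 ∂ν ≤ ∫ s, x s ⬝ᵥ x s ∂ν := by
        apply integral_mono_ae hsqint Idotx
        filter_upwards with s
        have h1 : x s i * x s i ≤ ∑ j, x s j * x s j :=
          Finset.single_le_sum (f := fun j => x s j * x s j)
            (fun j _ => mul_self_nonneg _) (Finset.mem_univ i)
        rw [pow_two]
        exact h1
      have hCS := cs_integral (ν := ν) (hxi2 i)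
      rw [hνuniv] at hCS
      have hxx : ∫ s, x s ⬝ᵥ x s ∂ν ≤ 2 * E / lam := by
        rw [le_div_iff₀ hlam]; linarith [hIx2]
      have hsq : (∫ s, |x s i| ∂ν) ^ 2 ≤ (c1 * sE) ^ 2 := by
        have hc1sq : c1 ^ 2 = 2 * V / lam := Real.sq_sqrt (by positivity)
        have : (c1 * sE) ^ 2 = (2 * V / lam) * E := by
          rw [mul_pow, hc1sq, hsE2]
        rw [this]
        calc (∫ s, |x s i| ∂ν) ^ 2 ≤ V * ∫ s, (x s i) ^ 2 ∂ν := hCS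
          _ ≤ V * (2 * E / lam) := by
              apply mul_le_mul_of_nonneg_left (hsqle.trans hxx) hV.le
          _ = (2 * V / lam) * E := by ring
      exact le_of_sq_le_sq' (integral_nonneg fun s => abs_nonneg _) (by positivity) hsq
    have hvI : ∀ i, ∫ s, |v s i| ∂ν ≤ c2 * sE := by
      intro i
      have hsqint : Integrable (fun s => (v s i) ^ 2) ν := by
        simpa [pow_two] using Ivv i i
      have hsqle : ∫ s, (v s i) ^ 2 ∂ν ≤ ∫ s, v s ⬝ᵥ v s ∂ν := by
        apply integral_mono_ae hsqint Idotv
        filter_upwards with s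
        have h1 : v s i * v s i ≤ ∑ j, v s j * v s j :=
          Finset.single_le_sum (f := fun j => v s j * v s j)
            (fun j _ => mul_self_nonneg _) (Finset.mem_univ i)
        rw [pow_two]
        exact h1
      have hCS := cs_integral (ν := ν) (hvi2 i)
      rw [hνuniv] at hCS
      have hvv : ∫ s, v s ⬝ᵥ v s ∂ν ≤ 2 * E / mu := by
        rw [le_div_iff₀ hmu]; linarith [hIv2]
      have hsq : (∫ s, |v s i| ∂ν) ^ 2 ≤ (c2 * sE) ^ 2 := by
        have hc2sq : c2 ^ 2 = 2 * V / mu := Real.sq_sqrt (by positivity)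
        have : (c2 * sE) ^ 2 = (2 * V / mu) * E := by
          rw [mul_pow, hc2sq, hsE2]
        rw [this]
        calc (∫ s, |v s i| ∂ν) ^ 2 ≤ V * ∫ s, (v s i) ^ 2 ∂ν := hCS
          _ ≤ V * (2 * E / mu) := by
              apply mul_le_mul_of_nonneg_left (hsqle.trans hvv) hV.le
          _ = (2 * V / mu) * E := by ring
      exact le_of_sq_le_sq' (integral_nonneg fun s => abs_nonneg _) (by positivity) hsq
    have hsumx : ∀ (c : ℝ), 0 ≤ c → ∑ j : Fin n, (c * ∫ s, |x s j| ∂ν) ≤ c * n * (c1 * sE) := by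
      intro c hc
      calc ∑ j : Fin n, (c * ∫ s, |x s j| ∂ν)
          ≤ ∑ _j : Fin n, c * (c1 * sE) :=
            Finset.sum_le_sum fun j _ => mul_le_mul_of_nonneg_left (hxI j) hc
        _ = c * n * (c1 * sE) := by
            rw [Finset.sum_const, Finset.card_univ, Fintype.card_fin, nsmul_eq_mul]; ring
    have huI : ∀ i, ∫ s, |u s i| ∂ν ≤ cu * sE := by
      intro i
      have hptu : ∀ s ∈ J, |u s i| ≤ |v s i| + ∑ j, KW * |x s j| := by
        intro s hs
        have hv : v s i = u s i + ∑ j, W s i j * x s j := rfl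
        have hu : u s i = v s i - ∑ j, W s i j * x s j := by rw [hv]; ring
        rw [hu]
        calc |v s i - ∑ j, W s i j * x s j| ≤ |v s i| + |∑ j, W s i j * x s j| :=
              abs_sub _ _
          _ ≤ |v s i| + ∑ j, |W s i j * x s j| := by
              have := Finset.abs_sum_le_sum_abs (fun j => W s i j * x s j) Finset.univ
              linarith
          _ ≤ |v s i| + ∑ j, KW * |x s j| := by
              have : ∀ j : Fin n, |W s i j * x s j| ≤ KW * |x s j| := by
                intro j
                rw [abs_mul]
                exact mul_le_mul_of_nonneg_right (hKW s (hJsub hs) i j) (abs_nonneg _)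
              have hsum := Finset.sum_le_sum (fun j (_ : j ∈ Finset.univ) => this j)
              linarith
      have hint : ∫ s, |u s i| ∂ν ≤ ∫ s, (|v s i| + ∑ j, KW * |x s j|) ∂ν := by
        apply integral_mono_ae (Iu1 i).abs
        · exact (Iv1 i).abs.add (integrable_finset_sum _ fun j _ => ((Ix1 j).abs.const_mul _))
        · filter_upwards [ae_J] with s hs
          exact hptu s hs
      rw [integral_add ((Iv1 i).abs)
        (integrable_finset_sum _ fun j _ => ((Ix1 j).abs.const_mul _)),
        integral_finset_sum _ (fun j _ => ((Ix1 j).abs.const_mul _))] at hint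
      simp_rw [integral_const_mul] at hint
      have h2 : ∑ j : Fin n, (KW * ∫ s, |x s j| ∂ν) ≤ KW * n * (c1 * sE) := hsumx KW hKW0
      have h3 := hvI i
      have : cu * sE = c2 * sE + KW * n * (c1 * sE) := by rw [hcudef]; ring
      rw [this]
      linarith
    -- the driving term
    set F : ℝ → Fin n → ℝ := fun s => A s *ᵥ x s + B s *ᵥ u s with hFdef
    have IFj : ∀ j, Integrable (fun s => F s j) ν := by
      intro j
      have hFj : (fun s => F s j)
          = fun s => (∑ p, A s j p * x s p) + (∑ q, B s j q * u s q) := rfl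
      rw [hFj]
      refine Integrable.add ?_ ?_
      · exact integrable_finset_sum _ fun p _ => (Ix1 p).bdd_mul (aesm A hAc j p)
          (ae_J.mono fun s hs => by
            simpa [Real.norm_eq_abs] using hKA s (hJsub hs) j p)
      · exact integrable_finset_sum _ fun q _ => (Iu1 q).bdd_mul (aesm B hBc j q)
          (ae_J.mono fun s hs => by
            simpa [Real.norm_eq_abs] using hKB s (hJsub hs) j q)
    have IF : Integrable F ν := integrable_of_components IFj
    have hsumu : ∀ (c : ℝ), 0 ≤ c → ∑ q : Fin l, (c * ∫ s, |u s q| ∂ν) ≤ c * l * (cu * sE) := by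
      intro c hc
      calc ∑ q : Fin l, (c * ∫ s, |u s q| ∂ν)
          ≤ ∑ _q : Fin l, c * (cu * sE) :=
            Finset.sum_le_sum fun q _ => mul_le_mul_of_nonneg_left (huI q) hc
        _ = c * l * (cu * sE) := by
            rw [Finset.sum_const, Finset.card_univ, Fintype.card_fin, nsmul_eq_mul]; ring
    have hFI : ∀ j, ∫ s, |F s j| ∂ν ≤ cF * sE := by
      intro j
      have hptF : ∀ s ∈ J, |F s j| ≤ (∑ p, KA * |x s p|) + (∑ q, KB * |u s q|) := by
        intro s hs
        have hFj : F s j = (∑ p, A s j p * x s p) + (∑ q, B s j q * u s q) := rfl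
        rw [hFj]
        calc |(∑ p, A s j p * x s p) + (∑ q, B s j q * u s q)|
            ≤ |∑ p, A s j p * x s p| + |∑ q, B s j q * u s q| := abs_add_le _ _
          _ ≤ (∑ p, |A s j p * x s p|) + (∑ q, |B s j q * u s q|) := by
              have h1 := Finset.abs_sum_le_sum_abs (fun p => A s j p * x s p) Finset.univ
              have h2 := Finset.abs_sum_le_sum_abs (fun q => B s j q * u s q) Finset.univ
              linarith
          _ ≤ (∑ p, KA * |x s p|) + (∑ q, KB * |u s q|) := by
              have h1 : ∀ p : Fin n, |A s j p * x s p| ≤ KA * |x s p| := fun p => by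
                rw [abs_mul]
                exact mul_le_mul_of_nonneg_right (hKA s (hJsub hs) j p) (abs_nonneg _)
              have h2 : ∀ q : Fin l, |B s j q * u s q| ≤ KB * |u s q| := fun q => by
                rw [abs_mul]
                exact mul_le_mul_of_nonneg_right (hKB s (hJsub hs) j q) (abs_nonneg _)
              have hs1 := Finset.sum_le_sum (fun p (_ : p ∈ Finset.univ) => h1 p)
              have hs2 := Finset.sum_le_sum (fun q (_ : q ∈ Finset.univ) => h2 q)
              linarith
      have hintx : Integrable (fun s => ∑ p, KA * |x s p|) ν :=
        integrable_finset_sum _ fun p _ => ((Ix1 p).abs.const_mul _)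
      have hintu : Integrable (fun s => ∑ q, KB * |u s q|) ν :=
        integrable_finset_sum _ fun q _ => ((Iu1 q).abs.const_mul _)
      have hint : ∫ s, |F s j| ∂ν ≤ ∫ s, ((∑ p, KA * |x s p|) + (∑ q, KB * |u s q|)) ∂ν := by
        apply integral_mono_ae (IFj j).abs (hintx.add hintu)
        filter_upwards [ae_J] with s hs
        exact hptF s hs
      rw [integral_add hintx hintu, integral_finset_sum _ (fun p _ => ((Ix1 p).abs.const_mul _)),
        integral_finset_sum _ (fun q _ => ((Iu1 q).abs.const_mul _))] at hint
      simp_rw [integral_const_mul] at hint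
      have h2 := hsumx KA hKA0
      have h3 := hsumu KB hKB0
      have h4 : cF * sE = KA * n * (c1 * sE) + KB * l * (cu * sE) := by rw [hcFdef]; ring
      rw [h4]
      linarith
    have hIOn : IntegrableOn F J volume := IF
    have hxT : ∀ j, |x T j| ≤ cT * sE := by
      intro j
      have key : ∀ t ∈ J, |x T j| ≤ |x t j| + cF * sE := by
        intro t ht
        have htIcc : t ∈ Icc t₀ T := ⟨ht.1.le, ht.2⟩
        have hInt1 : IntervalIntegrable F volume t₀ T :=
          (intervalIntegrable_iff_integrableOn_Ioc_of_le ht₀.2).mpr hIOn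
        have hInt2 : IntervalIntegrable F volume t₀ t :=
          (intervalIntegrable_iff_integrableOn_Ioc_of_le htIcc.1).mpr
            (hIOn.mono_set (Ioc_subset_Ioc_right htIcc.2))
        have hsub2 : x T - x t = ∫ τ in t..T, F τ := by
          rw [hODE T ⟨ht₀.2, le_rfl⟩, hODE t htIcc]
          rw [← intervalIntegral.integral_interval_sub_left hInt1 hInt2]
          abel
        have hj : x T j - x t j = ∫ τ in Ioc t T, F τ j := by
          have h1 : (x T - x t) j = x T j - x t j := rfl
          rw [← h1, hsub2, intervalIntegral.integral_of_le htIcc.2]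
          exact vec_setInt_apply (hIOn.mono_set (Ioc_subset_Ioc_left ht.1.le)) j
        have habs : |x T j - x t j| ≤ ∫ τ in J, |F τ j| := by
          rw [hj]
          calc |∫ τ in Ioc t T, F τ j| ≤ ∫ τ in Ioc t T, |F τ j| := by
                simpa [Real.norm_eq_abs] using
                  norm_integral_le_integral_norm (μ := volume.restrict (Ioc t T))
                    (fun τ => F τ j)
            _ ≤ ∫ τ in J, |F τ j| := by
                apply setIntegral_mono_set (IFj j).abs
                · filter_upwards with τ using abs_nonneg _
                · exact HasSubset.Subset.eventuallyLE (Ioc_subset_Ioc_left ht.1.le)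
        have hFb : ∫ τ in J, |F τ j| ≤ cF * sE := hFI j
        calc |x T j| = |x t j + (x T j - x t j)| := by ring_nf
          _ ≤ |x t j| + |x T j - x t j| := abs_add_le _ _
          _ ≤ |x t j| + cF * sE := by linarith
      have h1 : ∫ (_ : ℝ), |x T j| ∂ν = V * |x T j| := by
        rw [integral_const, measureReal_def, hνuniv, smul_eq_mul]
      have h2 : ∫ t, (|x t j| + cF * sE) ∂ν = (∫ t, |x t j| ∂ν) + V * (cF * sE) := by
        rw [integral_add ((Ix1 j).abs) (integrable_const _), integral_const, measureReal_def, hνuniv,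
          smul_eq_mul]
      have h3 : ∫ (_ : ℝ), |x T j| ∂ν ≤ ∫ t, (|x t j| + cF * sE) ∂ν := by
        apply integral_mono_ae (integrable_const _) (((Ix1 j).abs).add (integrable_const _))
        filter_upwards [ae_J] with t ht
        exact key t ht
      rw [h1, h2] at h3
      have h4 := hxI j
      have h5 : V * |x T j| ≤ c1 * sE + V * (cF * sE) := by linarith
      rw [← mul_le_mul_iff_right₀ hV]
      have h6 : V * (cT * sE) = c1 * sE + V * (cF * sE) := by
        rw [hcTdef]; field_simp
      linarith
    -- conclusion
    have hcost : LQRCost Mxx R S t₀ T x u (Psiq Aqi bi ci) = E + Psiq Aqi bi ci (x T) := rfl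
    rw [hcost]
    have hterm : Psiq Aqi bi ci (x T) ≥ -β * sE + ci := by
      unfold Psiq
      have h1 : 0 ≤ ((1:ℝ)/2) * (x T ⬝ᵥ (Aqi *ᵥ x T)) := by
        have := possemidef_dot hAqi (x T)
        linarith
      have h2 : bi ⬝ᵥ x T ≥ -((∑ j, |bi j|) * (cT * sE)) := by
        have : ∀ j, bi j * x T j ≥ -(|bi j| * (cT * sE)) := by
          intro j
          have hb1 : bi j * x T j ≥ -(|bi j| * |x T j|) := by
            rw [← abs_mul]
            exact neg_abs_le _
          have hb2 : |bi j| * |x T j| ≤ |bi j| * (cT * sE) :=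
            mul_le_mul_of_nonneg_left (hxT j) (abs_nonneg _)
          linarith
        have hsum : bi ⬝ᵥ x T ≥ ∑ j, -(|bi j| * (cT * sE)) := by
          apply Finset.sum_le_sum
          intro j _
          exact this j
        rw [Finset.sum_neg_distrib, ← Finset.sum_mul] at hsum
        linarith [hsum]
      have hβeq : β * sE = (∑ j, |bi j|) * (cT * sE) := by
        rw [hβdef]; ring
      linarith
    have : E - β * sE + ci ≥ ci - β ^ 2 / 4 := by
      nlinarith [sq_nonneg (sE - β / 2), hsE2]
    linarith

/-- **Key intermediate claim in the feedback characterization of optimal controls.**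
Under (A1)–(A2), let `(x*, u*)` be an admissible pair optimal for the terminal cost
`Ψ = min_i Ψ_i`, and let `k̃` minimize `i ↦ Ψ_i(x*(T))`.  Then `(x*, u*)` is also optimal
for the problem with terminal cost `Ψ_k̃` (its cost equals `Ṽ_k̃(t₀,x₀)`), and `k̃`
minimizes `i ↦ Ṽ_i(t₀,x₀)`. -/
theorem optimal_pair_terminal_index {n l m : ℕ} (hm : 0 < m) (T : ℝ) (hT : 0 < T)
    (A : ℝ → Matrix (Fin n) (Fin n) ℝ) (B S : ℝ → Matrix (Fin n) (Fin l) ℝ)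
    (Mxx : ℝ → Matrix (Fin n) (Fin n) ℝ) (R : ℝ → Matrix (Fin l) (Fin l) ℝ)
    (hA1A2 : A1A2 T A B S Mxx R)
    (Aq : Fin m → Matrix (Fin n) (Fin n) ℝ) (hAq : ∀ i, (Aq i).PosSemidef)
    (b : Fin m → Fin n → ℝ) (c : Fin m → ℝ)
    (t₀ : ℝ) (ht₀ : t₀ ∈ Icc 0 T) (x₀ : Fin n → ℝ)
    (xs : ℝ → Fin n → ℝ) (us : ℝ → Fin l → ℝ)
    (hadm : Admissible A B t₀ T x₀ xs us)
    (hopt : LQRCost Mxx R S t₀ T xs us (fun y => ⨅ i, Psiq (Aq i) (b i) (c i) y)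
      = LQRValue A B Mxx R S t₀ T x₀ (fun y => ⨅ i, Psiq (Aq i) (b i) (c i) y))
    (k : Fin m)
    (hk : ∀ i, Psiq (Aq k) (b k) (c k) (xs T) ≤ Psiq (Aq i) (b i) (c i) (xs T)) :
    -- (i) `(x*, u*)` is optimal for the problem with terminal cost `Ψ_k̃`
    (LQRCost Mxx R S t₀ T xs us (Psiq (Aq k) (b k) (c k))
      = LQRValue A B Mxx R S t₀ T x₀ (Psiq (Aq k) (b k) (c k))) ∧
    -- (ii) `k̃` minimizes `i ↦ Ṽ_i(t₀,x₀)`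
    (∀ i, LQRValue A B Mxx R S t₀ T x₀ (Psiq (Aq k) (b k) (c k))
      ≤ LQRValue A B Mxx R S t₀ T x₀ (Psiq (Aq i) (b i) (c i))) := by
  haveI : Nonempty (Fin m) := ⟨⟨0, hm⟩⟩
  set Ψ : (Fin n → ℝ) → ℝ := fun y => ⨅ i, Psiq (Aq i) (b i) (c i) y with hΨdef
  -- lower bounds
  have hKi : ∀ i : Fin m, ∃ K : ℝ, ∀ x u, Admissible A B t₀ T x₀ x u →
      K ≤ LQRCost Mxx R S t₀ T x u (Psiq (Aq i) (b i) (c i)) := fun i =>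
    cost_bddBelow hT A B S Mxx R hA1A2 (Aq i) (hAq i) (b i) (c i) ht₀ x₀
  choose K hK using hKi
  obtain ⟨i₀K, -, hi₀K⟩ := Finset.exists_min_image Finset.univ K ⟨⟨0, hm⟩, Finset.mem_univ _⟩
  set K0 : ℝ := K i₀K with hK0def
  have hK0le : ∀ i, K0 ≤ K i := fun i => hi₀K i (Finset.mem_univ i)
  -- pointwise infimum facts
  have hbddr : ∀ y : Fin n → ℝ, BddBelow (range fun i => Psiq (Aq i) (b i) (c i) y) :=
    fun y => (Set.finite_range _).bddBelow
  have hinf_le : ∀ (y : Fin n → ℝ) (i : Fin m), Ψ y ≤ Psiq (Aq i) (b i) (c i) y :=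
    fun y i => ciInf_le (hbddr y) i
  have hinf_k : Ψ (xs T) = Psiq (Aq k) (b k) (c k) (xs T) :=
    le_antisymm (hinf_le _ k) (le_ciInf hk)
  -- cost comparisons
  have hcost_le : ∀ x u (i : Fin m), LQRCost Mxx R S t₀ T x u Ψ
      ≤ LQRCost Mxx R S t₀ T x u (Psiq (Aq i) (b i) (c i)) := by
    intro x u i
    unfold LQRCost
    exact add_le_add (le_refl _) (hinf_le (x T) i)
  have hcost_eq_k : LQRCost Mxx R S t₀ T xs us (Psiq (Aq k) (b k) (c k))
      = LQRCost Mxx R S t₀ T xs us Ψ := by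
    unfold LQRCost
    rw [hinf_k]
  -- lower bound for Ψ-costs
  have hKΨ : ∀ x u, Admissible A B t₀ T x₀ x u → K0 ≤ LQRCost Mxx R S t₀ T x u Ψ := by
    intro x u hxu
    obtain ⟨i₀, hi₀⟩ := Finite.exists_min (fun i : Fin m => Psiq (Aq i) (b i) (c i) (x T))
    have heq : LQRCost Mxx R S t₀ T x u Ψ
        = LQRCost Mxx R S t₀ T x u (Psiq (Aq i₀) (b i₀) (c i₀)) := by
      unfold LQRCost
      congr 1
      exact le_antisymm (hinf_le _ i₀) (le_ciInf hi₀)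
    rw [heq]
    exact (hK0le i₀).trans (hK i₀ x u hxu)
  -- the optimal value
  set a : ℝ := LQRCost Mxx R S t₀ T xs us Ψ with hadef
  have hamem : a ∈ {cc : ℝ | ∃ x u, Admissible A B t₀ T x₀ x u ∧
      cc = LQRCost Mxx R S t₀ T x u Ψ} := ⟨xs, us, hadm, rfl⟩
  have hbddΨ : BddBelow {cc : ℝ | ∃ x u, Admissible A B t₀ T x₀ x u ∧
      cc = LQRCost Mxx R S t₀ T x u Ψ} := by
    refine ⟨K0, fun cc hcc => ?_⟩
    obtain ⟨x, u, hxu, rfl⟩ := hcc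
    exact hKΨ x u hxu
  have ha_lb : ∀ x u, Admissible A B t₀ T x₀ x u → a ≤ LQRCost Mxx R S t₀ T x u Ψ := by
    intro x u hxu
    have h1 : LQRValue A B Mxx R S t₀ T x₀ Ψ ≤ LQRCost Mxx R S t₀ T x u Ψ :=
      csInf_le hbddΨ ⟨x, u, hxu, rfl⟩
    rw [hopt]
    exact h1
  -- lower bound of each S_i by a
  have ha_lb_i : ∀ (i : Fin m) (cc : ℝ), cc ∈ {cc : ℝ | ∃ x u, Admissible A B t₀ T x₀ x u ∧
      cc = LQRCost Mxx R S t₀ T x u (Psiq (Aq i) (b i) (c i))} → a ≤ cc := by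
    rintro i cc ⟨x, u, hxu, rfl⟩
    exact (ha_lb x u hxu).trans (hcost_le x u i)
  have hmem_i : ∀ i : Fin m, LQRCost Mxx R S t₀ T xs us (Psiq (Aq i) (b i) (c i))
      ∈ {cc : ℝ | ∃ x u, Admissible A B t₀ T x₀ x u ∧
        cc = LQRCost Mxx R S t₀ T x u (Psiq (Aq i) (b i) (c i))} :=
    fun i => ⟨xs, us, hadm, rfl⟩
  have hamem_k : a ∈ {cc : ℝ | ∃ x u, Admissible A B t₀ T x₀ x u ∧
      cc = LQRCost Mxx R S t₀ T x u (Psiq (Aq k) (b k) (c k))} :=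
    ⟨xs, us, hadm, hcost_eq_k.symm⟩
  have hvalk : LQRValue A B Mxx R S t₀ T x₀ (Psiq (Aq k) (b k) (c k)) = a := by
    apply le_antisymm
    · exact csInf_le ⟨a, fun cc hcc => ha_lb_i k cc hcc⟩ hamem_k
    · exact le_csInf ⟨a, hamem_k⟩ (fun cc hcc => ha_lb_i k cc hcc)
  constructor
  · rw [hvalk, hadef]
    exact hcost_eq_k
  · intro i
    rw [hvalk]
    exact le_csInf ⟨_, hmem_i i⟩ (fun cc hcc => ha_lb_i i cc hcc)
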